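/- A B-semimodule B^{(n,1)} has cardinality n+1, and this is minimal among B-semimodules of rank n: any B-semimodule of rank n has cardinality at least n+1, and if it has cardinality exactly n+1 then it is isomorphic to B^{(n,1)}. -/

import Mathlib

/-- `B^{(n,1)}` (realized as `Fin (n+1)` with `max`) has cardinality `n+1`, and this is
minimal among `B`-semimodules of rank `n`: any `B`-semimodule of rank `n` has at least
`n+1` elements, and if it has exactly `n+1` elements it is isomorphic to `B^{(n,1)}`. -/
theorem stmt6 (n : ℕ) (E : Type*) [AddCommMonoid E] [Fintype E]
    (hidem : ∀ x : E, x + x = x)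
    (hrank : IsLeast {k : ℕ | ∃ S : Finset E, S.card = k ∧
      AddSubmonoid.closure (S : Set E) = ⊤} n) :
    Fintype.card (Fin (n + 1)) = n + 1 ∧
    n + 1 ≤ Fintype.card E ∧
    (Fintype.card E = n + 1 →
      ∃ e : E ≃ Fin (n + 1), e 0 = 0 ∧ ∀ x y : E, e (x + y) = max (e x) (e y)) := by
  classical
  letI : PartialOrder E :=
  { le := fun x y => x + y = y
    le_refl := hidem
    le_trans := fun a b c hab hbc => by
      show a + c = c
      rw [← hbc, ← add_assoc, hab]
    le_antisymm := fun a b hab hba => by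
      show a = b
      rw [← hab, add_comm]
      exact hba.symm }
  -- the lower bound n + 1 ≤ card E
  have hlow : n + 1 ≤ Fintype.card E := by
    have hgen : AddSubmonoid.closure ((Finset.univ.erase (0 : E) : Finset E) : Set E) = ⊤ := by
      rw [eq_top_iff]
      intro x _
      by_cases hx : x = 0
      · simpa [hx] using (AddSubmonoid.closure
          ((Finset.univ.erase (0 : E) : Finset E) : Set E)).zero_mem
      · exact AddSubmonoid.subset_closure (by simp [hx])
    have h1 := hrank.2 ⟨Finset.univ.erase 0, rfl, hgen⟩
    have h2 : (Finset.univ.erase (0 : E)).card = Fintype.card E - 1 := by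
      rw [Finset.card_erase_of_mem (Finset.mem_univ _), Finset.card_univ]
    have h3 : 0 < Fintype.card E := Fintype.card_pos
    omega
  refine ⟨Fintype.card_fin _, hlow, ?_⟩
  intro hcard
  -- the set of nonzero join-irreducible elements
  set J : Finset E := Finset.univ.filter
    (fun x => x ≠ 0 ∧ ∀ a b : E, a + b = x → a = x ∨ b = x) with hJdef
  letI : WellFoundedLT E := Finite.to_wellFoundedLT
  have hJgen : ∀ x : E, x ∈ AddSubmonoid.closure (J : Set E) := by
    intro x
    induction x using WellFoundedLT.induction with
    | ind x IH =>
      by_cases hx0 : x = 0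
      · rw [hx0]; exact (AddSubmonoid.closure (J : Set E)).zero_mem
      · by_cases hxi : ∀ a b : E, a + b = x → a = x ∨ b = x
        · exact AddSubmonoid.subset_closure
            (Finset.mem_coe.2 (Finset.mem_filter.2 ⟨Finset.mem_univ _, hx0, hxi⟩))
        · push_neg at hxi
          obtain ⟨a, b, hab, ha, hb⟩ := hxi
          have hax : a < x := by
            refine lt_of_le_of_ne ?_ ha
            show a + x = x
            rw [← hab, ← add_assoc, hidem]
          have hbx : b < x := by
            refine lt_of_le_of_ne ?_ hb
            show b + x = x
            rw [← hab, add_comm a b, ← add_assoc, hidem]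
          rw [← hab]
          exact (AddSubmonoid.closure (J : Set E)).add_mem (IH a hax) (IH b hbx)
  have hJn : n ≤ J.card := hrank.2 ⟨J, rfl, by
    rw [eq_top_iff]; intro x _; exact hJgen x⟩
  have hJsub : J ⊆ Finset.univ.erase (0 : E) := by
    intro x hx
    simp only [hJdef, Finset.mem_filter] at hx
    simp [hx.2.1]
  have herasecard : (Finset.univ.erase (0 : E)).card = n := by
    rw [Finset.card_erase_of_mem (Finset.mem_univ _), Finset.card_univ, hcard]
    omega
  have hJeq : J = Finset.univ.erase (0 : E) :=
    Finset.eq_of_subset_of_card_le hJsub (by omega)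
  have irr : ∀ x : E, x ≠ 0 → ∀ a b : E, a + b = x → a = x ∨ b = x := by
    intro x hx
    have hxJ : x ∈ J := by rw [hJeq]; simp [hx]
    simp only [hJdef, Finset.mem_filter] at hxJ
    exact hxJ.2.2
  have htot : ∀ x y : E, x ≤ y ∨ y ≤ x := by
    intro x y
    by_cases hs : x + y = 0
    · left
      have hx0 : x = 0 := by
        have hxle : x ≤ (0 : E) := by
          show x + 0 = 0
          rw [← hs, ← add_assoc, hidem]
        have h0le : (0 : E) ≤ x := zero_add x
        exact le_antisymm hxle h0le
      rw [hx0]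
      exact zero_add y
    · rcases irr (x + y) hs x y rfl with h | h
      · right
        show y + x = x
        rw [h, add_comm y (x + y), add_assoc, hidem]
      · left
        show x + y = y
        rw [h, ← add_assoc, hidem]
  letI : LinearOrder E :=
  { (inferInstance : PartialOrder E) with
    le_total := htot
    toDecidableLE := Classical.decRel _ }
  let e : E ≃o Fin (n + 1) := (Fintype.orderIsoFinOfCardEq E hcard).symm
  refine ⟨e.toEquiv, ?_, ?_⟩
  · have h1 : e 0 ≤ 0 := by
      have : (0 : E) ≤ e.symm 0 := zero_add _
      have := e.monotone this
      simpa using this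
    exact le_antisymm h1 (Fin.zero_le _)
  · intro x y
    rcases htot x y with h | h
    · have hxy : x + y = y := h
      have : e x ≤ e y := e.monotone h
      show e (x + y) = max (e x) (e y)
      rw [hxy, max_eq_right this]
    · have hxy : x + y = x := by rw [add_comm]; exact h
      have : e y ≤ e x := e.monotone h
      show e (x + y) = max (e x) (e y)
      rw [hxy, max_eq_left this]
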